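/- arXiv:2010.08645 — 3 statements merged into one kernel-verified Lean document; each statement's English description precedes it below -/
import Mathlib

section
/- Let Λ be a τ-tilting finite K-stone algebra and let X = S ⊔ T[1] be a semibrick pair consisting of two bricks. If Ext^1_Λ(S,S) = 0 and dim_K Hom_Λ(T,S) = 1, then every nonzero homomorphism f : T → S is a minimal left Filt(S)-approximation of T, i.e. every homomorphism from T to a module in Filt(S) factors through f and f is left minimal. Moreover: (1) if f is injective, then X is singly left mutation compatible at S and μ_S^+(T[1]) = coker(f); (2) if f is surjective, then X is singly left mutation compatible at S and μ_S^+(T[1]) = (ker f)[1]. -/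
open CategoryTheory

attribute [local instance] HasDerivedCategory.standard

namespace Paper

variable (K Λ : Type) [Field K] [Ring Λ] [Algebra K Λ] [FiniteDimensional K Λ]

/-- A brick: a finite module whose endomorphism ring is a division ring. -/
def IsBrick (S : ModuleCat.{0} Λ) : Prop :=
  Module.Finite Λ S ∧ Nontrivial S ∧ ∀ f : S →ₗ[Λ] S, f ≠ 0 → Function.Bijective f

/-- Hom_Λ(A,B) = 0. -/
def NoHom (A B : ModuleCat.{0} Λ) : Prop := ∀ f : A →ₗ[Λ] B, f = 0

/-- Ext¹_Λ(A,B) = 0 : every short exact sequence 0 → B → E → A → 0 splits. -/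
def Ext1Vanish (A B : ModuleCat.{0} Λ) : Prop :=
  ∀ (E : ModuleCat.{0} Λ) (i : B →ₗ[Λ] E) (p : E →ₗ[Λ] A),
    Function.Injective i → Function.Surjective p → LinearMap.range i = LinearMap.ker p →
    ∃ s : A →ₗ[Λ] E, p.comp s = LinearMap.id

/-- A semibrick: a set of bricks which are pairwise hom-orthogonal. -/
def IsSemibrick (D : Set (ModuleCat.{0} Λ)) : Prop :=
  (∀ S ∈ D, IsBrick Λ S) ∧ ∀ S ∈ D, ∀ T ∈ D, S ≠ T → NoHom Λ S T ∧ NoHom Λ T S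

/-- A semibrick pair `D ⊔ U[1]`. -/
def IsSemibrickPair (D U : Set (ModuleCat.{0} Λ)) : Prop :=
  IsSemibrick Λ D ∧ IsSemibrick Λ U ∧
    ∀ S ∈ D, ∀ T ∈ U, NoHom Λ S T ∧ Ext1Vanish Λ S T

/-- `Y` is a direct summand (retract) of `X`. -/
def IsRetractOf {C : Type*} [Category C] (Y X : C) : Prop :=
  ∃ (s : Y ⟶ X) (r : X ⟶ Y), s ≫ r = 𝟙 Y

/-- `D ⊔ U[1]` is a 2-term simple minded collection: it is a semibrick pair and the
smallest triangulated subcategory of `D^b(mod Λ)` (realized as the objects of the derived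
category of `Mod Λ` with bounded, finitely generated homology) containing
`{S : S ∈ D} ∪ {T[1] : T ∈ U}` and closed under direct summands is all of `D^b(mod Λ)`. -/
def IsTwoTermSMC (D U : Set (ModuleCat.{0} Λ)) : Prop :=
  IsSemibrickPair Λ D U ∧
  ∀ (S : ObjectProperty (DerivedCategory (ModuleCat.{0} Λ))) [S.IsTriangulated],
    (∀ X Y, S X → IsRetractOf Y X → S Y) →
    (∀ M ∈ D, S ((DerivedCategory.singleFunctor (ModuleCat.{0} Λ) 0).obj M)) →
    (∀ M ∈ U, S (((DerivedCategory.singleFunctor (ModuleCat.{0} Λ) 0).obj M)⟦(1:ℤ)⟧)) →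
    ∀ Z : DerivedCategory (ModuleCat.{0} Λ),
      (∃ a b : ℤ, ∀ n : ℤ, (n < a ∨ b < n) →
        Subsingleton ((DerivedCategory.homologyFunctor (ModuleCat.{0} Λ) n).obj Z)) →
      (∀ n : ℤ, Module.Finite Λ ((DerivedCategory.homologyFunctor (ModuleCat.{0} Λ) n).obj Z)) →
      S Z

/-- `D ⊆ D'` up to isomorphism. -/
def SubsetUpToIso (D D' : Set (ModuleCat.{0} Λ)) : Prop :=
  ∀ S ∈ D, ∃ S' ∈ D', Nonempty (S ≅ S')

/-- The semibrick pair `D ⊔ U[1]` is completable. -/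
def Completable (D U : Set (ModuleCat.{0} Λ)) : Prop :=
  ∃ D' U', IsTwoTermSMC Λ D' U' ∧ SubsetUpToIso Λ D D' ∧ SubsetUpToIso Λ U U'

/-- The semibrick pair `D ⊔ U[1]` is pairwise completable. -/
def PairwiseCompletable (D U : Set (ModuleCat.{0} Λ)) : Prop :=
  ∀ S ∈ D, ∀ T ∈ U, ∃ D' U', IsTwoTermSMC Λ D' U' ∧
    (∃ S' ∈ D', Nonempty (S ≅ S')) ∧ (∃ T' ∈ U', Nonempty (T ≅ T'))

/-- `Λ` has the pairwise 2-simple minded completability property. -/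
def PairwiseCompletabilityProperty : Prop :=
  ∀ D U : Set (ModuleCat.{0} Λ), IsSemibrickPair Λ D U →
    PairwiseCompletable Λ D U → Completable Λ D U

/-- `Λ` is τ-tilting finite: only finitely many bricks up to isomorphism. -/
def TauTiltingFinite : Prop :=
  ∃ (n : ℕ) (f : Fin n → ModuleCat.{0} Λ),
    ∀ M : ModuleCat.{0} Λ, IsBrick Λ M → ∃ i, Nonempty (M ≅ f i)

/-- `rk Λ = n` : there are exactly `n` isomorphism classes of simple `Λ`-modules. -/
def AlgebraRank (n : ℕ) : Prop :=
  ∃ f : Fin n → ModuleCat.{0} Λ,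
    (∀ i, IsSimpleModule Λ (f i)) ∧
    (∀ i j, i ≠ j → ¬ Nonempty (f i ≅ f j)) ∧
    (∀ M : ModuleCat.{0} Λ, IsSimpleModule Λ M → ∃ i, Nonempty (M ≅ f i))

/-- `X` belongs to `Filt(C)` : it has a finite filtration whose subquotients are
isomorphic to members of `C`. -/
def FiltClass (C : Set (ModuleCat.{0} Λ)) (X : ModuleCat.{0} Λ) : Prop :=
  ∃ (n : ℕ) (c : Fin (n + 1) → Submodule Λ X),
    c 0 = ⊥ ∧ c (Fin.last n) = ⊤ ∧ (∀ i : Fin n, c i.castSucc ≤ c i.succ) ∧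
    ∀ i : Fin n, ∃ Z ∈ C,
      Nonempty ((↥(c i.succ) ⧸ (Submodule.comap (c i.succ).subtype (c i.castSucc))) ≃ₗ[Λ] Z)

/-- `X ∈ Filt(S)` for a single module `S`. -/
def IsFiltBy (S X : ModuleCat.{0} Λ) : Prop := FiltClass Λ {S} X

/-- `f : T → A` is a minimal left `Filt(S)`-approximation. -/
def IsMinimalLeftFiltApprox (S T A : ModuleCat.{0} Λ) (f : T →ₗ[Λ] A) : Prop :=
  IsFiltBy Λ S A ∧
  (∀ N : ModuleCat.{0} Λ, IsFiltBy Λ S N → ∀ j : T →ₗ[Λ] N,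
      ∃ h : A →ₗ[Λ] N, h.comp f = j) ∧
  (∀ h : A →ₗ[Λ] A, h.comp f = f → Function.Bijective h)

/-- The semibrick pair `D ⊔ U[1]` is singly left mutation compatible at `S ∈ D`. -/
def SinglyLeftCompatAt (D U : Set (ModuleCat.{0} Λ)) (S : ModuleCat.{0} Λ) : Prop :=
  S ∈ D ∧ ∀ T ∈ U, ∃ (A : ModuleCat.{0} Λ) (g : T →ₗ[Λ] A),
    IsMinimalLeftFiltApprox Λ S T A g ∧ (Function.Injective g ∨ Function.Surjective g)

/-- The short exact sequence `0 → A → E → T → 0` (with `A ∈ Filt S`) corresponds to the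
minimal left `Filt(S)`-approximation `T[-1] → A` in `D^b(mod Λ)` : every extension of `T`
by a module of `Filt(S)` is a pushout of it, and it is left minimal. -/
def IsMinimalExtApprox (S T A E : ModuleCat.{0} Λ) (i : A →ₗ[Λ] E) (p : E →ₗ[Λ] T) : Prop :=
  IsFiltBy Λ S A ∧ Function.Injective i ∧ Function.Surjective p ∧
    LinearMap.range i = LinearMap.ker p ∧
  (∀ (N F : ModuleCat.{0} Λ) (j : N →ₗ[Λ] F) (q : F →ₗ[Λ] T), IsFiltBy Λ S N →
      Function.Injective j → Function.Surjective q → LinearMap.range j = LinearMap.ker q →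
      ∃ (h : A →ₗ[Λ] N) (φ : E →ₗ[Λ] F), j.comp h = φ.comp i ∧ q.comp φ = p) ∧
  (∀ h : A →ₗ[Λ] A,
      (∃ φ : E →ₗ[Λ] E, i.comp h = φ.comp i ∧ p.comp φ = p) → Function.Bijective h)

/-- `D' ⊔ U'[1]` is the left mutation `μ_S^+(D ⊔ U[1])` of the semibrick pair `D ⊔ U[1]`
at `S ∈ D`. -/
def IsLeftMutation (S : ModuleCat.{0} Λ) (D U D' U' : Set (ModuleCat.{0} Λ)) : Prop :=
  SinglyLeftCompatAt Λ D U S ∧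
  (∀ R : ModuleCat.{0} Λ, R ∈ D' ↔
    ((∃ T ∈ D, T ≠ S ∧ ∃ (A : ModuleCat.{0} Λ) (i : A →ₗ[Λ] R) (p : R →ₗ[Λ] T),
        IsMinimalExtApprox Λ S T A R i p) ∨
     (∃ T ∈ U, ∃ (A : ModuleCat.{0} Λ) (g : T →ₗ[Λ] A),
        IsMinimalLeftFiltApprox Λ S T A g ∧ Function.Injective g ∧ ¬ Function.Surjective g ∧
        Nonempty (R ≅ ModuleCat.of Λ (A ⧸ LinearMap.range g))))) ∧
  (∀ R : ModuleCat.{0} Λ, R ∈ U' ↔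
    (Nonempty (R ≅ S) ∨
     ∃ T ∈ U, ∃ (A : ModuleCat.{0} Λ) (g : T →ₗ[Λ] A),
        IsMinimalLeftFiltApprox Λ S T A g ∧ Function.Surjective g ∧ ¬ Function.Injective g ∧
        Nonempty (R ≅ ModuleCat.of Λ (LinearMap.ker g))))

/-- One left mutation step between semibrick pairs. -/
def MutStep (X Y : Set (ModuleCat.{0} Λ) × Set (ModuleCat.{0} Λ)) : Prop :=
  ∃ S : ModuleCat.{0} Λ, IsLeftMutation Λ S X.1 X.2 Y.1 Y.2

/-- The semibrick pair `D ⊔ U[1]` is mutation compatible. -/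
def MutationCompatible (D U : Set (ModuleCat.{0} Λ)) : Prop :=
  U = ∅ ∨ ∃ U' : Set (ModuleCat.{0} Λ),
    Relation.ReflTransGen (MutStep Λ) (D, U) (∅, U')

/-- `S` is a `K`-stone: a brick with `End(S) ≅ K` and no self-extensions. -/
def IsKStone (S : ModuleCat.{0} Λ) : Prop :=
  IsBrick Λ S ∧ (∀ f : S →ₗ[Λ] S, ∃ c : K, ∀ x : S, f x = (algebraMap K Λ c) • x) ∧
    Ext1Vanish Λ S S

/-- `Λ` is a `K`-stone algebra. -/
def KStoneAlgebra : Prop := ∀ S : ModuleCat.{0} Λ, IsBrick Λ S → IsKStone K Λ S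

/-- `dim_K Hom_Λ(T,A) = 1`. -/
def HomDimOne (T A : ModuleCat.{0} Λ) : Prop :=
  ∃ f : T →ₗ[Λ] A, f ≠ 0 ∧
    ∀ g : T →ₗ[Λ] A, ∃ c : K, ∀ x : T, g x = (algebraMap K Λ c) • f x

/-- A wide subcategory of `mod Λ` : a class of finite modules closed under isomorphism,
kernels, cokernels and extensions. -/
def IsWide (W : Set (ModuleCat.{0} Λ)) : Prop :=
  (∀ M ∈ W, Module.Finite Λ M) ∧
  (∀ M ∈ W, ∀ N : ModuleCat.{0} Λ, Nonempty (M ≅ N) → N ∈ W) ∧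
  (∀ M ∈ W, ∀ N ∈ W, ∀ f : M →ₗ[Λ] N, ModuleCat.of Λ (LinearMap.ker f) ∈ W) ∧
  (∀ M ∈ W, ∀ N ∈ W, ∀ f : M →ₗ[Λ] N, ModuleCat.of Λ (N ⧸ LinearMap.range f) ∈ W) ∧
  (∀ (A E B : ModuleCat.{0} Λ), A ∈ W → B ∈ W → Module.Finite Λ E →
    ∀ (i : A →ₗ[Λ] E) (p : E →ₗ[Λ] B), Function.Injective i → Function.Surjective p →
      LinearMap.range i = LinearMap.ker p → E ∈ W)

/-- A simple object of the wide subcategory `W`. -/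
def IsWSimple (W : Set (ModuleCat.{0} Λ)) (M : ModuleCat.{0} Λ) : Prop :=
  M ∈ W ∧ Nontrivial M ∧
    ∀ N : Submodule Λ M, ModuleCat.of Λ N ∈ W → N = ⊥ ∨ N = ⊤

/-- The wide subcategory `W` has rank `n`: it has exactly `n` isomorphism classes of
simple objects. -/
def WideRank (W : Set (ModuleCat.{0} Λ)) (n : ℕ) : Prop :=
  ∃ f : Fin n → ModuleCat.{0} Λ,
    (∀ i, IsWSimple Λ W (f i)) ∧
    (∀ i j, i ≠ j → ¬ Nonempty (f i ≅ f j)) ∧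
    (∀ M : ModuleCat.{0} Λ, IsWSimple Λ W M → ∃ i, Nonempty (M ≅ f i))

/-- The smallest wide subcategory containing a class `C` of modules. -/
def smallestWide (C : Set (ModuleCat.{0} Λ)) : Set (ModuleCat.{0} Λ) :=
  {M | ∀ W : Set (ModuleCat.{0} Λ), IsWide Λ W → C ⊆ W → M ∈ W}

/-- `X ∈ Fac(C)` : `X` is a quotient of a finite direct sum of members of `C`. -/
def FacClass (C : Set (ModuleCat.{0} Λ)) (X : ModuleCat.{0} Λ) : Prop :=
  ∃ (n : ℕ) (f : Fin n → ModuleCat.{0} Λ), (∀ i, f i ∈ C) ∧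
    ∃ p : ((i : Fin n) → f i) →ₗ[Λ] X, Function.Surjective p

/-- `X ∈ Sub(C)` : `X` is a submodule of a finite direct sum of members of `C`. -/
def SubClass (C : Set (ModuleCat.{0} Λ)) (X : ModuleCat.{0} Λ) : Prop :=
  ∃ (n : ℕ) (f : Fin n → ModuleCat.{0} Λ), (∀ i, f i ∈ C) ∧
    ∃ j : X →ₗ[Λ] ((i : Fin n) → f i), Function.Injective j

/-- An indecomposable module. -/
def Indec (M : ModuleCat.{0} Λ) : Prop :=
  Nontrivial M ∧ ∀ N₁ N₂ : Submodule Λ M, IsCompl N₁ N₂ → N₁ = ⊥ ∨ N₂ = ⊥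


section Aux

variable {K Λ}

/-- Scalar multiplication by a central element `algebraMap K Λ a` as a `Λ`-linear map. -/
def scalarMapAux (a : K) (M : Type) [AddCommGroup M] [Module Λ M] : M →ₗ[Λ] M where
  toFun x := algebraMap K Λ a • x
  map_add' x y := smul_add _ x y
  map_smul' r x := by
    simp only [RingHom.id_apply, smul_smul]
    rw [Algebra.commutes]

lemma ext1_of_equiv {S B B' : ModuleCat.{0} Λ} (hB : Ext1Vanish Λ S B)
    (e : B ≃ₗ[Λ] B') : Ext1Vanish Λ S B' := by
  intro E i p hi hp hr
  refine hB E (i ∘ₗ (e : B →ₗ[Λ] B')) p (hi.comp e.injective) hp ?_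
  rw [← hr]
  ext x
  constructor
  · rintro ⟨y, rfl⟩; exact ⟨e y, rfl⟩
  · rintro ⟨y, rfl⟩; exact ⟨e.symm y, by simp⟩

lemma ext1_of_subsingleton {S B : ModuleCat.{0} Λ} (hB : Subsingleton B) :
    Ext1Vanish Λ S B := by
  intro E i p hi hp hr
  have hker : LinearMap.ker p = ⊥ := by
    rw [← hr]
    apply le_antisymm _ bot_le
    rintro x ⟨y, rfl⟩
    rw [Subsingleton.elim y 0, map_zero]
    exact Submodule.zero_mem ⊥
  have hbij : Function.Bijective p := ⟨LinearMap.ker_eq_bot.mp hker, hp⟩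
  refine ⟨(LinearEquiv.ofBijective p hbij).symm.toLinearMap, ?_⟩
  ext x
  exact (LinearEquiv.ofBijective p hbij).apply_symm_apply x

/-- Extension closure of `Ext¹(S, -) = 0`. -/
lemma ext1_extension {S B C N : ModuleCat.{0} Λ}
    (hB : Ext1Vanish Λ S B) (hC : Ext1Vanish Λ S C)
    (iB : B →ₗ[Λ] N) (pC : N →ₗ[Λ] C) (hiB : Function.Injective iB)
    (hpC : Function.Surjective pC) (hBC : LinearMap.range iB = LinearMap.ker pC) :
    Ext1Vanish Λ S N := by
  intro E i p hi hp hr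
  set J : Submodule Λ E := LinearMap.range (i ∘ₗ iB) with hJ
  set q : E →ₗ[Λ] (E ⧸ J) := J.mkQ with hq_def
  have hq : Function.Surjective q := Submodule.mkQ_surjective J
  have hqi0 : ∀ b : B, q (i (iB b)) = 0 := by
    intro b
    rw [hq_def, Submodule.mkQ_apply, Submodule.Quotient.mk_eq_zero]
    exact ⟨b, rfl⟩
  have hkill : LinearMap.ker pC ≤ LinearMap.ker (q ∘ₗ i) := by
    rw [← hBC]
    rintro x ⟨b, rfl⟩
    simp only [LinearMap.mem_ker, LinearMap.comp_apply]
    exact hqi0 b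
  set e := pC.quotKerEquivOfSurjective hpC with he_def
  set ibar : C →ₗ[Λ] (E ⧸ J) :=
    ((LinearMap.ker pC).liftQ (q ∘ₗ i) hkill) ∘ₗ e.symm.toLinearMap with hibar_def
  have hibar : ∀ n : N, ibar (pC n) = q (i n) := by
    intro n
    have h1 : e.symm (pC n) = Submodule.Quotient.mk n := by
      rw [LinearEquiv.symm_apply_eq]
      rfl
    rw [hibar_def]
    simp only [LinearMap.comp_apply, LinearEquiv.coe_coe, h1]
    rfl
  have hkill2 : J ≤ LinearMap.ker p := by
    rintro x ⟨b, rfl⟩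
    have hmem : i (iB b) ∈ LinearMap.range i := ⟨iB b, rfl⟩
    rw [hr] at hmem
    exact hmem
  set p' : (E ⧸ J) →ₗ[Λ] S := J.liftQ p hkill2 with hp'_def
  have hp'q : ∀ x : E, p' (q x) = p x := fun x => rfl
  have hinj' : Function.Injective ibar := by
    intro c₁ c₂ hc
    obtain ⟨n₁, rfl⟩ := hpC c₁
    obtain ⟨n₂, rfl⟩ := hpC c₂
    rw [hibar, hibar] at hc
    have hsub : i n₁ - i n₂ ∈ J := (Submodule.Quotient.eq J).mp hc
    rw [← map_sub] at hsub
    obtain ⟨b, hb⟩ := hsub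
    have hb' : iB b = n₁ - n₂ := hi hb
    have : n₁ - n₂ ∈ LinearMap.ker pC := by
      rw [← hBC]; exact ⟨b, hb'⟩
    rw [LinearMap.mem_ker, map_sub, sub_eq_zero] at this
    exact this
  have hsurj' : Function.Surjective p' := by
    intro s
    obtain ⟨x, hx⟩ := hp s
    exact ⟨q x, hx⟩
  have hrange' : LinearMap.range ibar = LinearMap.ker p' := by
    ext x
    constructor
    · rintro ⟨c₀, rfl⟩
      obtain ⟨n₀, rfl⟩ := hpC c₀
      rw [LinearMap.mem_ker, hibar]
      have : i n₀ ∈ LinearMap.ker p := by rw [← hr]; exact ⟨n₀, rfl⟩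
      exact this
    · intro hx
      obtain ⟨x₀, rfl⟩ := hq x
      rw [LinearMap.mem_ker, hp'q] at hx
      have : x₀ ∈ LinearMap.range i := by rw [hr]; exact hx
      obtain ⟨n₀, rfl⟩ := this
      exact ⟨pC n₀, (hibar n₀)⟩
  obtain ⟨s', hs'⟩ := hC (ModuleCat.of Λ (E ⧸ J)) ibar p' hinj' hsurj' hrange'
  have hs'app : ∀ x : S, p' (s' x) = x := fun x => congrArg (· x) hs'
  set E₂ : Submodule Λ E := (LinearMap.range s').comap q with hE₂
  have hmem₂ : ∀ b : B, (i ∘ₗ iB) b ∈ E₂ := by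
    intro b
    have : q (i (iB b)) = s' 0 := by rw [hqi0, map_zero]
    exact ⟨0, this.symm⟩
  set i₂ : B →ₗ[Λ] E₂ := (i ∘ₗ iB).codRestrict E₂ hmem₂ with hi₂_def
  set p₂ : E₂ →ₗ[Λ] S := p ∘ₗ E₂.subtype with hp₂_def
  have hi₂ : Function.Injective i₂ := by
    intro b b' hbb'
    have : i (iB b) = i (iB b') := congrArg Subtype.val hbb'
    exact hiB (hi this)
  have hp₂ : Function.Surjective p₂ := by
    intro x
    obtain ⟨e₀, he₀⟩ := hq (s' x)
    refine ⟨⟨e₀, ⟨x, he₀.symm⟩⟩, ?_⟩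
    have : p₂ ⟨e₀, ⟨x, he₀.symm⟩⟩ = p' (q e₀) := rfl
    rw [this, he₀, hs'app]
  have hr₂ : LinearMap.range i₂ = LinearMap.ker p₂ := by
    ext x
    constructor
    · rintro ⟨b, rfl⟩
      have : p₂ (i₂ b) = p (i (iB b)) := rfl
      rw [LinearMap.mem_ker, this]
      exact hkill2 ⟨b, rfl⟩
    · intro hx
      obtain ⟨e₀, he₀⟩ := x
      obtain ⟨y, hy⟩ := he₀
      have hpe : p e₀ = 0 := hx
      have hy0 : y = 0 := by
        have h3 : p' (s' y) = p' (q e₀) := congrArg p' hy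
        rw [hs'app, hp'q, hpe] at h3
        exact h3
      have hqe : q e₀ = 0 := by
        rw [hy0, map_zero] at hy
        exact hy.symm
      have : e₀ ∈ J := by rwa [hq_def, Submodule.mkQ_apply, Submodule.Quotient.mk_eq_zero] at hqe
      obtain ⟨b, hb⟩ := this
      exact ⟨b, Subtype.ext hb⟩
  obtain ⟨t, ht⟩ := hB (ModuleCat.of Λ E₂) i₂ p₂ hi₂ hp₂ hr₂
  refine ⟨E₂.subtype ∘ₗ t, ?_⟩
  ext x
  exact congrArg (· x) ht

/-- `Ext` vanishing and factorisation through `f` for every module filtered by `S`. -/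
lemma filt_strong {S T : ModuleCat.{0} Λ}
    (hSS : Ext1Vanish Λ S S)
    (f : T →ₗ[Λ] S)
    (hfac : ∀ g : T →ₗ[Λ] S, ∃ a : K, ∀ x : T, g x = algebraMap K Λ a • f x)
    (N : ModuleCat.{0} Λ) (hN : IsFiltBy Λ S N) :
    Ext1Vanish Λ S N ∧ ∀ j : T →ₗ[Λ] N, ∃ h : S →ₗ[Λ] N, h ∘ₗ f = j := by
  obtain ⟨n, c, hc0, hctop, hmono, hquot⟩ := hN
  have main : ∀ i : Fin (n + 1),
      Ext1Vanish Λ S (ModuleCat.of Λ (c i)) ∧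
      ∀ j : T →ₗ[Λ] (c i), ∃ h : S →ₗ[Λ] (c i), h ∘ₗ f = j := by
    intro i
    induction i using Fin.induction with
    | zero =>
        have hsub : Subsingleton (c 0) := by rw [hc0]; infer_instance
        constructor
        · exact ext1_of_subsingleton hsub
        · intro j
          exact ⟨0, by apply LinearMap.ext; intro x; exact @Subsingleton.elim _ hsub _ _⟩
    | succ i ih =>
        obtain ⟨Z, hZ, ⟨eZ⟩⟩ := hquot i
        rw [Set.mem_singleton_iff] at hZ
        set K₀ := Submodule.comap (c i.succ).subtype (c i.castSucc) with hK₀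
        have eS : ((c i.succ : Submodule Λ N) ⧸ K₀) ≃ₗ[Λ] S := by
          rw [← hZ]; exact eZ
        set π : (c i.succ) →ₗ[Λ] S := eS.toLinearMap ∘ₗ K₀.mkQ with hπ
        have hπsurj : Function.Surjective π :=
          eS.surjective.comp (Submodule.mkQ_surjective K₀)
        set ι : (c i.castSucc) →ₗ[Λ] (c i.succ) := Submodule.inclusion (hmono i) with hι
        have hιinj : Function.Injective ι := Submodule.inclusion_injective (hmono i)
        have hrange : LinearMap.range ι = LinearMap.ker π := by
          have hkπ : LinearMap.ker π = K₀ := by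
            rw [hπ, LinearMap.ker_comp, LinearEquiv.ker, Submodule.comap_bot,
              Submodule.ker_mkQ]
          rw [hkπ]
          ext x
          constructor
          · rintro ⟨y, rfl⟩
            exact y.2
          · intro hx
            exact ⟨⟨x.1, hx⟩, Subtype.ext rfl⟩
        constructor
        · exact ext1_extension ih.1 hSS ι π hιinj hπsurj hrange
        · intro j
          obtain ⟨s0, hs⟩ := ih.1 (ModuleCat.of Λ (c i.succ)) ι π hιinj hπsurj hrange
          let s : (S : ModuleCat.{0} Λ) →ₗ[Λ] (c i.succ) := s0
          have hsapp : ∀ x : S, π (s x) = x := fun x => congrArg (· x) hs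
          obtain ⟨a, ha⟩ := hfac (π ∘ₗ j)
          let j₁ : (T : ModuleCat.{0} Λ) →ₗ[Λ] (c i.succ) := j - s ∘ₗ (π ∘ₗ j)
          have hj₁π : ∀ x : T, π (j₁ x) = 0 := by
            intro x
            show π (j x - s (π (j x))) = 0
            rw [map_sub, hsapp, sub_self]
          have hj₁mem : ∀ x : T, ((j₁ x : (c i.succ)) : N) ∈ c i.castSucc := by
            intro x
            have hmem : j₁ x ∈ LinearMap.ker π := hj₁π x
            rw [← hrange] at hmem
            obtain ⟨y, hy⟩ := hmem
            rw [← hy]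
            exact y.2
          let j₂ : (T : ModuleCat.{0} Λ) →ₗ[Λ] (c i.castSucc) :=
            ((c i.succ).subtype ∘ₗ j₁).codRestrict (c i.castSucc) hj₁mem
          obtain ⟨h₂, hh₂⟩ := ih.2 j₂
          refine ⟨ι ∘ₗ h₂ + s ∘ₗ scalarMapAux a S, ?_⟩
          apply LinearMap.ext
          intro x
          have hιj₂ : ι (j₂ x) = j₁ x := Subtype.ext rfl
          have h4 : s (algebraMap K Λ a • f x) = s (π (j x)) := by
            rw [← ha x]
            rfl
          show ι (h₂ (f x)) + s (algebraMap K Λ a • f x) = j x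
          calc ι (h₂ (f x)) + s (algebraMap K Λ a • f x)
              = ι (j₂ x) + s (π (j x)) := by
                rw [show h₂ (f x) = j₂ x from congrArg (· x) hh₂, h4]
            _ = j₁ x + s (π (j x)) := by rw [hιj₂]
            _ = j x := by
                show j x - s (π (j x)) + s (π (j x)) = j x
                abel
  have eN : (c (Fin.last n)) ≃ₗ[Λ] N :=
    (LinearEquiv.ofEq _ _ hctop).trans (Submodule.topEquiv)
  obtain ⟨hext, hfact⟩ := main (Fin.last n)
  constructor
  · exact ext1_of_equiv (B := ModuleCat.of Λ (c (Fin.last n))) hext eN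
  · intro j
    obtain ⟨h, hh⟩ := hfact (eN.symm.toLinearMap ∘ₗ j)
    refine ⟨eN.toLinearMap ∘ₗ h, ?_⟩
    ext x
    have : h (f x) = eN.symm (j x) := congrArg (· x) hh
    simp only [LinearMap.comp_apply, this, LinearEquiv.coe_coe, LinearEquiv.apply_symm_apply]

end Aux

/-- over a τ-tilting finite `K`-stone algebra, if `Ext¹(S,S) = 0` and
`dim_K Hom(T,S) = 1` then any nonzero `f : T → S` is a minimal left `Filt(S)`-approximation,
and `μ_S^+(T[1])` is `coker f` (resp. `(ker f)[1]`) when `f` is injective (resp. surjective). -/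
theorem nonzero_hom_is_minimal_approx (hfin : TauTiltingFinite Λ) (hK : KStoneAlgebra K Λ)
    (S T : ModuleCat.{0} Λ) (h : IsSemibrickPair Λ {S} {T})
    (hext : Ext1Vanish Λ S S) (hdim : HomDimOne K Λ T S)
    (f : T →ₗ[Λ] S) (hf : f ≠ 0) :
    IsMinimalLeftFiltApprox Λ S T S f ∧
    (Function.Injective f →
      (SinglyLeftCompatAt Λ {S} {T} S ∧
        ∀ (A : ModuleCat.{0} Λ) (g : T →ₗ[Λ] A), IsMinimalLeftFiltApprox Λ S T A g →
          Function.Injective g →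
          Nonempty ((A ⧸ LinearMap.range g) ≃ₗ[Λ] (S ⧸ LinearMap.range f)))) ∧
    (Function.Surjective f →
      (SinglyLeftCompatAt Λ {S} {T} S ∧
        ∀ (A : ModuleCat.{0} Λ) (g : T →ₗ[Λ] A), IsMinimalLeftFiltApprox Λ S T A g →
          Function.Surjective g →
          Nonempty ((LinearMap.ker g) ≃ₗ[Λ] (LinearMap.ker f)))) := by

  have hbrick : IsBrick Λ S := h.1.1 S rfl
  obtain ⟨f₀, hf₀ne, hall⟩ := hdim
  obtain ⟨c₀, hc₀⟩ := hall f
  have hc₀ne : c₀ ≠ 0 := by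
    intro hc
    apply hf
    ext x
    simp [hc₀ x, hc]
  have hfac : ∀ g : T →ₗ[Λ] S, ∃ a : K, ∀ x : T, g x = algebraMap K Λ a • f x := by
    intro g
    obtain ⟨c₁, hc₁⟩ := hall g
    refine ⟨c₁ * c₀⁻¹, fun x => ?_⟩
    rw [hc₁ x, hc₀ x, smul_smul, ← map_mul, mul_assoc, inv_mul_cancel₀ hc₀ne, mul_one]
  have hfiltS : IsFiltBy Λ S S := by
    refine ⟨1, ![⊥, ⊤], rfl, rfl, fun i => ?_, fun i => ?_⟩
    · have : i = 0 := Subsingleton.elim i 0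
      subst this
      show (⊥ : Submodule Λ S) ≤ ⊤
      exact bot_le
    · have : i = 0 := Subsingleton.elim i 0
      subst this
      refine ⟨S, rfl, ⟨?_⟩⟩
      have hbot : Submodule.comap (![(⊥ : Submodule Λ S), ⊤] (0:Fin 1).succ).subtype
          (![(⊥ : Submodule Λ S), ⊤] (0:Fin 1).castSucc) = ⊥ := by
        show Submodule.comap (⊤ : Submodule Λ S).subtype ⊥ = ⊥
        rw [Submodule.comap_bot, Submodule.ker_subtype]
      exact (Submodule.quotEquivOfEqBot _ hbot).trans Submodule.topEquiv
  have Fmin : IsMinimalLeftFiltApprox Λ S T S f := by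
    refine ⟨hfiltS, ?_, ?_⟩
    · intro Nmod hNfilt j
      exact (filt_strong hext f hfac Nmod hNfilt).2 j
    · intro h₀ hh₀
      have hne : h₀ ≠ 0 := by
        intro h0
        rw [h0, LinearMap.zero_comp] at hh₀
        exact hf hh₀.symm
      exact hbrick.2.2 h₀ hne
  have uniq : ∀ (A : ModuleCat.{0} Λ) (g : T →ₗ[Λ] A), IsMinimalLeftFiltApprox Λ S T A g →
      ∃ h₁ : S →ₗ[Λ] A, h₁ ∘ₗ f = g ∧ Function.Bijective h₁ := by
    intro A g hg
    obtain ⟨h₁, hh₁⟩ := Fmin.2.1 A hg.1 g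
    obtain ⟨h₁', hh₁'⟩ := hg.2.1 S hfiltS f
    have hb1 : Function.Bijective (h₁' ∘ₗ h₁) := by
      apply Fmin.2.2
      rw [LinearMap.comp_assoc, hh₁, hh₁']
    have hb2 : Function.Bijective (h₁ ∘ₗ h₁') := by
      apply hg.2.2
      rw [LinearMap.comp_assoc, hh₁', hh₁]
    refine ⟨h₁, hh₁, ?_, ?_⟩
    · intro a b hab
      exact hb1.1 (show h₁' (h₁ a) = h₁' (h₁ b) from congrArg h₁' hab)
    · intro y
      obtain ⟨z, hz⟩ := hb2.2 y
      exact ⟨h₁' z, hz⟩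
  have coker : ∀ (A : ModuleCat.{0} Λ) (g : T →ₗ[Λ] A), IsMinimalLeftFiltApprox Λ S T A g →
      Nonempty ((A ⧸ LinearMap.range g) ≃ₗ[Λ] (S ⧸ LinearMap.range f)) := by
    intro A g hg
    obtain ⟨h₁, hh₁, hb⟩ := uniq A g hg
    let e : (S : ModuleCat.{0} Λ) ≃ₗ[Λ] A := LinearEquiv.ofBijective h₁ hb
    have hgt : ∀ t : T, g t = e (f t) := fun t => (congrArg (· t) hh₁).symm
    refine ⟨Submodule.Quotient.equiv (LinearMap.range g) (LinearMap.range f) e.symm ?_⟩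
    ext y
    simp only [Submodule.mem_map, LinearMap.mem_range]
    constructor
    · rintro ⟨x, ⟨t, rfl⟩, rfl⟩
      exact ⟨t, by rw [hgt t]; exact (e.symm_apply_apply (f t)).symm⟩
    · rintro ⟨t, rfl⟩
      exact ⟨g t, ⟨t, rfl⟩, by rw [hgt t]; exact e.symm_apply_apply (f t)⟩
  have kerEq : ∀ (A : ModuleCat.{0} Λ) (g : T →ₗ[Λ] A), IsMinimalLeftFiltApprox Λ S T A g →
      Nonempty ((LinearMap.ker g) ≃ₗ[Λ] (LinearMap.ker f)) := by
    intro A g hg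
    obtain ⟨h₁, hh₁, hb⟩ := uniq A g hg
    have hgt : ∀ t : T, g t = h₁ (f t) := fun t => (congrArg (· t) hh₁).symm
    have hk : LinearMap.ker g = LinearMap.ker f := by
      ext x
      simp only [LinearMap.mem_ker]
      constructor
      · intro hx
        apply hb.1
        rw [← hgt x, hx, map_zero]
      · intro hx
        rw [hgt x, hx, map_zero]
    exact ⟨LinearEquiv.ofEq _ _ hk⟩
  have compat : (Function.Injective f ∨ Function.Surjective f) →
      SinglyLeftCompatAt Λ {S} {T} S := by
    intro hor
    refine ⟨rfl, ?_⟩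
    intro T' hT'
    rw [Set.mem_singleton_iff] at hT'
    subst hT'
    exact ⟨S, f, Fmin, hor⟩
  exact ⟨Fmin,
    fun hinj => ⟨compat (Or.inl hinj), fun A g hg _ => coker A g hg⟩,
    fun hsurj => ⟨compat (Or.inr hsurj), fun A g hg _ => kerEq A g hg⟩⟩


end Paper
end

section
/- Let Λ be a K-stone finite-dimensional K-algebra, let S and T be bricks in mod Λ such that S ⊔ T[1] is a semibrick pair, and let f : T ↠ S be an epimorphism. Then ker(f) is a brick, dim_K Hom_Λ(ker f, T) = 1, and Hom_Λ(ker f, S) = 0 = Hom_Λ(S, ker f). -/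
open CategoryTheory

attribute [local instance] HasDerivedCategory.standard

namespace Paper

variable (K Λ : Type) [Field K] [Ring Λ] [Algebra K Λ] [FiniteDimensional K Λ]

section Aux

/-- If `Ext¹(B,C) = 0` then every map `A → C` extends along an injection `ι : A → T`
whose cokernel is `B` (i.e. `Hom(T,C) → Hom(A,C)` is surjective). -/
lemma ext_lift {A T B C : ModuleCat.{0} Λ}
    (ι : A →ₗ[Λ] T) (p : T →ₗ[Λ] B)
    (hι : Function.Injective ι) (hp : Function.Surjective p)
    (hexact : LinearMap.range ι = LinearMap.ker p)
    (hext : Ext1Vanish Λ B C) (j : A →ₗ[Λ] C) :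
    ∃ h : T →ₗ[Λ] C, h.comp ι = j := by
  classical
  set M : Submodule Λ (C × T) := LinearMap.range (LinearMap.prod j (-ι)) with hM
  let E : ModuleCat.{0} Λ := ModuleCat.of Λ ((C × T) ⧸ M)
  let β : C →ₗ[Λ] E := M.mkQ.comp (LinearMap.inl Λ C T)
  let α : T →ₗ[Λ] E := M.mkQ.comp (LinearMap.inr Λ C T)
  have hpι : ∀ a : A, p (ι a) = 0 := by
    intro a
    have : ι a ∈ LinearMap.ker p := hexact ▸ LinearMap.mem_range_self ι a
    exact this
  have hq0 : M ≤ LinearMap.ker (p.comp (LinearMap.snd Λ C T)) := by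
    rintro x ⟨a, rfl⟩
    simp [LinearMap.mem_ker, hpι a]
  let q : E →ₗ[Λ] B := M.liftQ (p.comp (LinearMap.snd Λ C T)) hq0
  have hqα : ∀ t : T, q (α t) = p t := fun t => rfl
  have hqβ : ∀ c : C, q (β c) = 0 := fun c => by
    show p 0 = 0
    simp
  have hβinj : Function.Injective β := by
    rw [injective_iff_map_eq_zero]
    intro c hc
    have hmem : ((c, 0) : C × T) ∈ M := (Submodule.Quotient.mk_eq_zero M).mp hc
    obtain ⟨a, ha⟩ := hmem
    have h2 : -ι a = 0 := congrArg Prod.snd ha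
    have ha0 : a = 0 := hι (by simpa using h2)
    have h1 : j a = c := congrArg Prod.fst ha
    rw [← h1, ha0, map_zero]
  have hqsurj : Function.Surjective q := by
    intro b
    obtain ⟨t, rfl⟩ := hp b
    exact ⟨α t, hqα t⟩
  have hrange : LinearMap.range β = LinearMap.ker q := by
    apply le_antisymm
    · rintro x ⟨c, rfl⟩
      exact hqβ c
    · rintro x hx
      obtain ⟨⟨c, t⟩, rfl⟩ := M.mkQ_surjective x
      have hpt : p t = 0 := hx
      have : t ∈ LinearMap.range ι := hexact ▸ hpt
      obtain ⟨a, rfl⟩ := this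
      refine ⟨c + j a, ?_⟩
      show M.mkQ (c + j a, 0) = M.mkQ (c, ι a)
      rw [Submodule.mkQ_apply, Submodule.mkQ_apply, Submodule.Quotient.eq]
      exact ⟨a, by simp [Prod.ext_iff]⟩
  obtain ⟨s, hs⟩ := hext E β q hβinj hqsurj hrange
  have hs' : ∀ b : B, q (s b) = b := fun b => LinearMap.congr_fun hs b
  let w : T →ₗ[Λ] E := α - (s.comp q).comp α
  have hw : ∀ t : T, w t ∈ LinearMap.range β := by
    intro t
    rw [hrange]
    show q (α t - s (q (α t))) = 0
    rw [map_sub, hs']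
    exact sub_self _
  let e := LinearEquiv.ofInjective β hβinj
  refine ⟨e.symm.toLinearMap.comp (w.codRestrict (LinearMap.range β) hw), ?_⟩
  ext a
  have hwa : w (ι a) = β (j a) := by
    show α (ι a) - s (q (α (ι a))) = β (j a)
    rw [hqα, hpι a, map_zero, sub_zero]
    show M.mkQ (0, ι a) = M.mkQ (j a, 0)
    rw [Submodule.mkQ_apply, Submodule.mkQ_apply, Submodule.Quotient.eq]
    exact ⟨-a, by simp [Prod.ext_iff]⟩
  show e.symm ⟨w (ι a), hw (ι a)⟩ = j a
  have : (⟨w (ι a), hw (ι a)⟩ : LinearMap.range β) = e (j a) := by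
    apply Subtype.ext
    show w (ι a) = ((e (j a) : LinearMap.range β) : E)
    rw [LinearEquiv.ofInjective_apply]
    exact hwa
  rw [this, LinearEquiv.symm_apply_apply]

/-- If `Ext¹(C,A) = 0` then every map `C → B` lifts along a surjection `p : T → B`
with kernel `A`. -/
lemma ext_colift {A T B C : ModuleCat.{0} Λ}
    (ι : A →ₗ[Λ] T) (p : T →ₗ[Λ] B)
    (hι : Function.Injective ι) (hp : Function.Surjective p)
    (hexact : LinearMap.range ι = LinearMap.ker p)
    (hext : Ext1Vanish Λ C A) (g : C →ₗ[Λ] B) :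
    ∃ h : C →ₗ[Λ] T, p.comp h = g := by
  classical
  have hpι : ∀ a : A, p (ι a) = 0 := by
    intro a
    have : ι a ∈ LinearMap.ker p := hexact ▸ LinearMap.mem_range_self ι a
    exact this
  set M : Submodule Λ (T × C) :=
    LinearMap.ker (p.comp (LinearMap.fst Λ T C) - g.comp (LinearMap.snd Λ T C)) with hM
  have hMmem : ∀ x : T × C, x ∈ M ↔ p x.1 = g x.2 := by
    intro x
    rw [hM, LinearMap.mem_ker]
    constructor
    · intro hx
      have h1 : p x.1 - g x.2 = 0 := hx
      exact sub_eq_zero.mp h1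
    · intro hx
      show p x.1 - g x.2 = 0
      rw [hx, sub_self]
  let E : ModuleCat.{0} Λ := ModuleCat.of Λ M
  let i' : A →ₗ[Λ] E := (LinearMap.prod ι 0).codRestrict M (fun a => by
    rw [hMmem]
    show p (ι a) = g 0
    rw [hpι a, map_zero])
  let p' : E →ₗ[Λ] C := (LinearMap.snd Λ T C).comp M.subtype
  have hi'inj : Function.Injective i' := by
    intro a b hab
    have : ι a = ι b := congrArg (fun x => (Subtype.val x).1) hab
    exact hι this
  have hp'surj : Function.Surjective p' := by
    intro c
    obtain ⟨t, ht⟩ := hp (g c)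
    exact ⟨⟨(t, c), (hMmem (t, c)).mpr ht⟩, rfl⟩
  have hrange : LinearMap.range i' = LinearMap.ker p' := by
    apply le_antisymm
    · rintro x ⟨a, rfl⟩
      rfl
    · rintro ⟨⟨t, c⟩, hm⟩ hx
      have hc : c = 0 := hx
      subst hc
      have hpt : p t = 0 := by
        have := (hMmem (t, 0)).mp hm
        simpa using this
      have : t ∈ LinearMap.range ι := hexact ▸ hpt
      obtain ⟨a, rfl⟩ := this
      exact ⟨a, rfl⟩
  obtain ⟨s, hs⟩ := hext E i' p' hi'inj hp'surj hrange
  have hs' : ∀ c : C, p' (s c) = c := fun c => LinearMap.congr_fun hs c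
  refine ⟨(LinearMap.fst Λ T C).comp (M.subtype.comp s), ?_⟩
  ext c
  set sc : ↥M := s c with hscdef
  have hm := (hMmem (sc : ↑T × ↑C)).mp sc.2
  have hp2 : ((sc : ↑T × ↑C)).2 = c := hs' c
  show p ((sc : ↑T × ↑C)).1 = g c
  rw [hm, hp2]

end Aux

/-- over a `K`-stone algebra, for a semibrick pair `S ⊔ T[1]` and an
epimorphism `f : T ↠ S`, the kernel of `f` is a brick, `dim_K Hom(ker f, T) = 1`,
and `Hom(ker f, S) = 0 = Hom(S, ker f)`. -/
theorem ker_of_epi (hK : KStoneAlgebra K Λ)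
    (S T : ModuleCat.{0} Λ) (h : IsSemibrickPair Λ {S} {T})
    (f : T →ₗ[Λ] S) (hf : Function.Surjective f) :
    IsBrick Λ (ModuleCat.of Λ (LinearMap.ker f)) ∧
    HomDimOne K Λ (ModuleCat.of Λ (LinearMap.ker f)) T ∧
    NoHom Λ (ModuleCat.of Λ (LinearMap.ker f)) S ∧
    NoHom Λ S (ModuleCat.of Λ (LinearMap.ker f)) := by
  obtain ⟨hD, hU, hDU⟩ := h
  have hSb : IsBrick Λ S := hD.1 S rfl
  have hTb : IsBrick Λ T := hU.1 T rfl
  obtain ⟨hnohomST, hextST⟩ := hDU S rfl T rfl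
  have hSnt : Nontrivial S := hSb.2.1
  let ι : ↥(LinearMap.ker f) →ₗ[Λ] T := (LinearMap.ker f).subtype
  have hιinj : Function.Injective ι := Submodule.injective_subtype _
  have hιrange : LinearMap.range ι = LinearMap.ker f := Submodule.range_subtype _
  -- nontriviality of the kernel
  have hNnt : Nontrivial ↥(LinearMap.ker f) := by
    rcases subsingleton_or_nontrivial ↥(LinearMap.ker f) with hs | h'
    · exfalso
      have hker : LinearMap.ker f = ⊥ := by
        apply Submodule.eq_bot_of_subsingleton
      have finj : Function.Injective f := LinearMap.ker_eq_bot.mp hker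
      let e := LinearEquiv.ofBijective f ⟨finj, hf⟩
      have h0 : e.symm.toLinearMap = 0 := hnohomST e.symm.toLinearMap
      obtain ⟨x, y, hxy⟩ := hSnt
      apply hxy
      have hx : e.symm x = 0 := by simpa using LinearMap.congr_fun h0 x
      have hy : e.symm y = 0 := by simpa using LinearMap.congr_fun h0 y
      calc x = e (e.symm x) := (e.apply_symm_apply x).symm
        _ = e (e.symm y) := by rw [hx, hy]
        _ = y := e.apply_symm_apply y
    · exact h'
  -- finiteness of the kernel
  have hTfin : Module.Finite Λ T := hTb.1
  haveI := hTfin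
  haveI hnoeth : IsNoetherianRing Λ := isNoetherian_of_tower K inferInstance
  haveI hTnoeth : IsNoetherian Λ ↑T := isNoetherian_of_isNoetherianRing_of_finite Λ ↑T
  have hNfin : Module.Finite Λ ↥(LinearMap.ker f) :=
    Module.Finite.iff_fg.mpr (IsNoetherian.noetherian _)
  -- Hom(N, T) = K • ι
  have hEndT := (hK T hTb).2.1
  have key : ∀ j : ↥(LinearMap.ker f) →ₗ[Λ] T, ∃ c : K,
      ∀ x : ↥(LinearMap.ker f), j x = algebraMap K Λ c • (x : T) := by
    intro j
    obtain ⟨h', hh'⟩ := ext_lift Λ (A := ModuleCat.of Λ ↥(LinearMap.ker f)) (T := T)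
      (B := S) (C := T) ι f hιinj hf (by rw [hιrange]) hextST j
    obtain ⟨c, hc⟩ := hEndT h'
    refine ⟨c, fun x => ?_⟩
    calc j x = h' (ι x) := (LinearMap.congr_fun hh' x).symm
      _ = algebraMap K Λ c • (x : T) := hc (x : T)
  -- N is a brick
  have hNbij : ∀ e : ↥(LinearMap.ker f) →ₗ[Λ] ↥(LinearMap.ker f),
      e ≠ 0 → Function.Bijective e := by
    intro e he
    obtain ⟨c, hc⟩ := key (ι.comp e)
    have hc' : ∀ x : ↥(LinearMap.ker f), ((e x : T)) = algebraMap K Λ c • (x : T) := hc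
    have hc0 : c ≠ 0 := by
      intro hc0
      apply he
      ext x
      rw [hc' x, hc0, map_zero, zero_smul]
      simp
    have huv : (algebraMap K Λ c⁻¹) * (algebraMap K Λ c) = 1 := by
      rw [← map_mul, inv_mul_cancel₀ hc0, map_one]
    have hvu : (algebraMap K Λ c) * (algebraMap K Λ c⁻¹) = 1 := by
      rw [← map_mul, mul_inv_cancel₀ hc0, map_one]
    constructor
    · intro x y hxy
      apply Subtype.ext
      have hxy' : algebraMap K Λ c • (x : T) = algebraMap K Λ c • (y : T) := by
        rw [← hc' x, ← hc' y, hxy]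
      calc (x : T) = (algebraMap K Λ c⁻¹ * algebraMap K Λ c) • (x : T) := by
            rw [huv, one_smul]
        _ = algebraMap K Λ c⁻¹ • (algebraMap K Λ c • (x : T)) := by rw [mul_smul]
        _ = algebraMap K Λ c⁻¹ • (algebraMap K Λ c • (y : T)) := by rw [hxy']
        _ = (algebraMap K Λ c⁻¹ * algebraMap K Λ c) • (y : T) := by rw [mul_smul]
        _ = (y : T) := by rw [huv, one_smul]
    · intro y
      refine ⟨algebraMap K Λ c⁻¹ • y, ?_⟩
      apply Subtype.ext
      rw [hc' (algebraMap K Λ c⁻¹ • y)]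
      calc algebraMap K Λ c • ((algebraMap K Λ c⁻¹ • y : ↥(LinearMap.ker f)) : T)
          = algebraMap K Λ c • (algebraMap K Λ c⁻¹ • (y : T)) := rfl
        _ = (algebraMap K Λ c * algebraMap K Λ c⁻¹) • (y : T) := by rw [mul_smul]
        _ = (y : T) := by rw [hvu, one_smul]
  have hNbrick : IsBrick Λ (ModuleCat.of Λ (LinearMap.ker f)) := ⟨hNfin, hNnt, hNbij⟩
  refine ⟨hNbrick, ?_, ?_, ?_⟩
  · -- HomDimOne
    refine ⟨ι, ?_, ?_⟩
    · intro h0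
      obtain ⟨x, y, hxy⟩ := hNnt
      apply hxy
      apply Subtype.ext
      have hx : ι x = 0 := by simpa using LinearMap.congr_fun h0 x
      have hy : ι y = 0 := by simpa using LinearMap.congr_fun h0 y
      rw [show ((x : T)) = ι x from rfl, show ((y : T)) = ι y from rfl, hx, hy]
    · intro g
      obtain ⟨c, hc⟩ := key g
      exact ⟨c, hc⟩
  · -- NoHom N S
    have hsuff : ∀ g : ↥(LinearMap.ker f) →ₗ[Λ] S, g = 0 := by
      intro g
      have hextNN := (hK (ModuleCat.of Λ (LinearMap.ker f)) hNbrick).2.2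
      obtain ⟨j, hj⟩ := ext_colift Λ (A := ModuleCat.of Λ ↥(LinearMap.ker f)) (T := T)
        (B := S) (C := ModuleCat.of Λ ↥(LinearMap.ker f)) ι f hιinj hf (by rw [hιrange])
        hextNN g
      obtain ⟨c, hc⟩ := key j
      ext x
      have hgx : g x = f (j x) := (LinearMap.congr_fun hj x).symm
      have hx0 : f (x : T) = 0 := x.2
      have hgx0 : g x = 0 :=
        calc g x = f (j x) := hgx
          _ = f (algebraMap K Λ c • (x : T)) := congrArg f (hc x)
          _ = algebraMap K Λ c • f (x : T) := map_smul f _ _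
          _ = 0 := by rw [hx0, smul_zero]
      simpa using hgx0
    exact hsuff
  · -- NoHom S N
    have hsuff : ∀ g : S →ₗ[Λ] ↥(LinearMap.ker f), g = 0 := by
      intro g
      have h0 : ι.comp g = 0 := hnohomST (ι.comp g)
      ext x
      have h1 : ι (g x) = 0 := by simpa using LinearMap.congr_fun h0 x
      have h2 : g x = 0 := hιinj (by rw [map_zero]; exact h1)
      simpa using h2
    exact hsuff

end Paper
end

section
/- Fix n ≥ 1. For a permutation w of {1, …, n+1} with one-line notation w_1 … w_{n+1} (so w_i = w(i)), define des(w) = {(w_{i+1}, w_i) : 1 ≤ i ≤ n and w_i > w_{i+1}} and asc(w) = {(w_i, w_{i+1}) : 1 ≤ i ≤ n and w_i < w_{i+1}}. Then a permutation is determined by its ascent and descent sets: if permutations v and w of {1, …, n+1} satisfy asc(v) = asc(w) and des(v) = des(w), then v = w. Equivalently, for disjoint sets A and D of pairs from {1, …, n+1} with |A| + |D| = n, there is at most one permutation w with asc(w) = A and des(w) = D. -/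
namespace Paper

/-- The ascent set of a permutation `w` of `{1, …, n+1}` (modeled on `Fin (n+1)`):
pairs `(w_i, w_{i+1})` with `w_i < w_{i+1}`. -/
def ascSet (n : ℕ) (w : Equiv.Perm (Fin (n + 1))) : Set (Fin (n + 1) × Fin (n + 1)) :=
  {p | ∃ i : Fin n, w i.castSucc < w i.succ ∧ p = (w i.castSucc, w i.succ)}

/-- The descent set of a permutation `w` of `{1, …, n+1}` (modeled on `Fin (n+1)`):
pairs `(w_{i+1}, w_i)` with `w_i > w_{i+1}`. -/
def desSet (n : ℕ) (w : Equiv.Perm (Fin (n + 1))) : Set (Fin (n + 1) × Fin (n + 1)) :=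
  {p | ∃ i : Fin n, w i.succ < w i.castSucc ∧ p = (w i.succ, w i.castSucc)}

/-- a permutation is determined by its ascent and descent sets. -/
theorem perm_eq_of_ascSet_eq_and_desSet_eq (n : ℕ) (hn : 1 ≤ n)
    (v w : Equiv.Perm (Fin (n + 1)))
    (hasc : ascSet n v = ascSet n w) (hdes : desSet n v = desSet n w) :
    v = w := by
  -- Combined: each consecutive pair of v matches some consecutive pair of w.
  have hS : ∀ i : Fin n, ∃ j : Fin n, v i.castSucc = w j.castSucc ∧ v i.succ = w j.succ := by
    intro i
    have hne : v i.castSucc ≠ v i.succ := by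
      intro h
      have := v.injective h
      have : (i.castSucc : ℕ) = i.succ := congrArg Fin.val this
      simp at this
    rcases lt_trichotomy (v i.castSucc) (v i.succ) with h | h | h
    · have hmem : (v i.castSucc, v i.succ) ∈ ascSet n v := ⟨i, h, rfl⟩
      rw [hasc] at hmem
      obtain ⟨j, _, hp⟩ := hmem
      exact ⟨j, congrArg Prod.fst hp, congrArg Prod.snd hp⟩
    · exact absurd h hne
    · have hmem : (v i.succ, v i.castSucc) ∈ desSet n v := ⟨i, h, rfl⟩
      rw [hdes] at hmem
      obtain ⟨j, _, hp⟩ := hmem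
      exact ⟨j, congrArg Prod.snd hp, congrArg Prod.fst hp⟩
  -- Base case: v 0 = w 0.
  have h0 : v 0 = w 0 := by
    by_contra hne
    obtain ⟨k, hk⟩ := v.surjective (w 0)
    have hk0 : k ≠ 0 := by
      intro h; rw [h] at hk; exact hne hk
    obtain ⟨j, rfl⟩ := Fin.eq_succ_of_ne_zero hk0
    obtain ⟨j', hj1, hj2⟩ := hS j
    rw [hk] at hj2
    have := w.injective hj2
    exact Fin.succ_ne_zero j' this.symm
  -- Inductive step and conclusion.
  ext x
  induction x using Fin.induction with
  | zero => exact congrArg Fin.val h0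
  | succ i ih =>
    obtain ⟨j, hj1, hj2⟩ := hS i
    have hcs : v i.castSucc = w i.castSucc := Fin.val_injective ih
    rw [hcs] at hj1
    have : j = i := Fin.castSucc_injective n (w.injective hj1).symm
    rw [this] at hj2
    exact congrArg Fin.val hj2

end Paper
end
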